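/- Let A : ℝ → ℝ be concave and twice differentiable, B > 0, and g : ℝ → ℝ strictly convex and twice differentiable, λ > 0. Then the function L(a) = -log(e^{A(a)} / (e^{A(a)} + B)) + λ·g(a) is strictly convex. -/

import Mathlib

open Real Set

theorem stmt1 (A A' A'' g g' g'' : ℝ → ℝ) (B lam : ℝ)
    (hB : 0 < B) (hlam : 0 < lam)
    (hA' : ∀ x, HasDerivAt A (A' x) x)
    (hA'' : ∀ x, HasDerivAt A' (A'' x) x)
    (hAconc : ∀ x, A'' x ≤ 0)
    (hg' : ∀ x, HasDerivAt g (g' x) x)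
    (hg'' : ∀ x, HasDerivAt g' (g'' x) x)
    (hgconv : ∀ x, 0 < g'' x) :
    StrictConvexOn ℝ univ
      (fun a => -Real.log (Real.exp (A a) / (Real.exp (A a) + B)) + lam * g a) := by
  have hE : ∀ x : ℝ, 0 < Real.exp (A x) + B := fun x => by positivity
  have hrw : (fun a => -Real.log (Real.exp (A a) / (Real.exp (A a) + B)) + lam * g a)
      = fun a => Real.log (Real.exp (A a) + B) - A a + lam * g a := by
    funext a
    rw [Real.log_div (Real.exp_ne_zero _) (ne_of_gt (hE a)), Real.log_exp, neg_sub]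
  rw [hrw]
  set L' : ℝ → ℝ := fun x =>
    Real.exp (A x) * A' x / (Real.exp (A x) + B) - A' x + lam * g' x with hL'def
  set L'' : ℝ → ℝ := fun x =>
    (((Real.exp (A x) * A' x * A' x + Real.exp (A x) * A'' x) * (Real.exp (A x) + B)
      - Real.exp (A x) * A' x * (Real.exp (A x) * A' x)) / (Real.exp (A x) + B) ^ 2)
      - A'' x + lam * g'' x with hL''def
  have hd1 : ∀ x, HasDerivAt (fun a => Real.log (Real.exp (A a) + B) - A a + lam * g a)
      (L' x) x := fun x => by
    have hexp : HasDerivAt (fun a => Real.exp (A a) + B) (Real.exp (A x) * A' x) x :=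
      ((hA' x).exp).add_const B
    have hlog := hexp.log (ne_of_gt (hE x))
    have := ((hlog.sub (hA' x)).add ((hg' x).const_mul lam))
    simpa [hL'def, Pi.add_def, Pi.sub_def] using this
  have hd2 : ∀ x, HasDerivAt L' (L'' x) x := fun x => by
    have hnum : HasDerivAt (fun a => Real.exp (A a) * A' a)
        (Real.exp (A x) * A' x * A' x + Real.exp (A x) * A'' x) x :=
      ((hA' x).exp).mul (hA'' x)
    have hden : HasDerivAt (fun a => Real.exp (A a) + B) (Real.exp (A x) * A' x) x :=
      ((hA' x).exp).add_const B
    have hdiv := hnum.div hden (ne_of_gt (hE x))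
    have := (hdiv.sub (hA'' x)).add ((hg'' x).const_mul lam)
    simpa [hL'def, hL''def, Pi.add_def, Pi.sub_def, Pi.div_def] using this
  have hderiv1 : deriv (fun a => Real.log (Real.exp (A a) + B) - A a + lam * g a) = L' :=
    funext fun x => (hd1 x).deriv
  apply strictConvexOn_of_deriv2_pos convex_univ
  · exact fun x _ => (hd1 x).continuousAt.continuousWithinAt
  · intro x hx
    have h2 : deriv^[2] (fun a => Real.log (Real.exp (A a) + B) - A a + lam * g a) x
        = L'' x := by
      simp only [Function.iterate_succ, Function.iterate_zero, Function.comp_apply, id,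
        hderiv1]
      exact (hd2 x).deriv
    rw [h2]
    have he : 0 < Real.exp (A x) := Real.exp_pos _
    have hEx := hE x
    have hA2 := hAconc x
    have hg2 := hgconv x
    have key : 0 ≤ ((Real.exp (A x) * A' x * A' x + Real.exp (A x) * A'' x)
        * (Real.exp (A x) + B) - Real.exp (A x) * A' x * (Real.exp (A x) * A' x))
        / (Real.exp (A x) + B) ^ 2 - A'' x := by
      have heq : ((Real.exp (A x) * A' x * A' x + Real.exp (A x) * A'' x)
          * (Real.exp (A x) + B) - Real.exp (A x) * A' x * (Real.exp (A x) * A' x))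
          / (Real.exp (A x) + B) ^ 2 - A'' x
          = (Real.exp (A x) * A' x * A' x * B - A'' x * (Real.exp (A x) + B) * B)
            / (Real.exp (A x) + B) ^ 2 := by
        field_simp
        ring
      rw [heq]
      apply div_nonneg _ (by positivity)
      nlinarith [mul_nonneg (mul_nonneg he.le (sq_nonneg (A' x))) hB.le, mul_pos hEx hB, mul_nonneg (mul_nonneg (neg_nonneg.mpr hA2) hEx.le) hB.le]
    have : 0 < lam * g'' x := mul_pos hlam hg2
    simp only [hL''def]
    linarith
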